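/- Let 0 < β ≤ γ with βγ < 1, let Δ̄ = (1+√(βγ))/(1-√(βγ)), let D ≥ 1 be an integer, and let c ∈ (0,1/2). Then f_D(c·√(γ/β)) ≤ 4cD/(Δ̄-1), where f_D(x) = D(1-βγ)x/((βx+1)(x+γ)). -/

import Mathlib

/-- with `Δ̄ = (1+√(βγ))/(1-√(βγ))` and `c ∈ (0, 1/2)`,
`f_D(c·√(γ/β)) ≤ 4cD/(Δ̄-1)`. -/
theorem fD_at_c_sqrt_bound (β γ : ℝ) (hβ : 0 < β) (hβγ : β ≤ γ) (h1 : β * γ < 1)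
    (D : ℕ) (hD : 1 ≤ D) (c : ℝ) (hc : c ∈ Set.Ioo (0:ℝ) (1/2)) :
    (D : ℝ) * (1 - β * γ) * (c * Real.sqrt (γ / β)) /
        ((β * (c * Real.sqrt (γ / β)) + 1) * (c * Real.sqrt (γ / β) + γ)) ≤
      4 * c * (D : ℝ) /
        ((1 + Real.sqrt (β * γ)) / (1 - Real.sqrt (β * γ)) - 1) := by
  obtain ⟨hc0, hc2⟩ := hc
  have hγ : 0 < γ := lt_of_lt_of_le hβ hβγ
  set s := Real.sqrt (β * γ) with hsdef
  set t := Real.sqrt (γ / β) with htdef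
  have hs0 : 0 < s := Real.sqrt_pos.2 (mul_pos hβ hγ)
  have ht0 : 0 < t := Real.sqrt_pos.2 (div_pos hγ hβ)
  have hs2 : s ^ 2 = β * γ := Real.sq_sqrt (mul_pos hβ hγ).le
  have hs1 : s < 1 := by
    nlinarith [hs2]
  have hbt : β * t = s := by
    rw [hsdef, htdef, ← Real.sqrt_sq hβ.le, ← Real.sqrt_mul (sq_nonneg β)]
    congr 1
    field_simp
    ring_nf; rw [Real.sq_sqrt (sq_nonneg β)]
  have hts : t * s = γ := by
    rw [hsdef, htdef, ← Real.sqrt_mul (div_pos hγ hβ).le]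
    have : γ / β * (β * γ) = γ ^ 2 := by field_simp
    rw [this, Real.sqrt_sq hγ.le]
  have hD' : (1:ℝ) ≤ (D:ℝ) := by exact_mod_cast hD
  have h1s : (1:ℝ) - s ≠ 0 := by linarith
  have hΔ : (1 + s) / (1 - s) - 1 = 2 * s / (1 - s) := by
    rw [div_sub_one h1s]; congr 1; ring
  have hRHS : 4 * c * (D:ℝ) / ((1 + s) / (1 - s) - 1) = 2 * c * (D:ℝ) * (1 - s) / s := by
    rw [hΔ]
    field_simp
    ring
  rw [hRHS]
  have hnum : (D:ℝ) * (1 - β * γ) * (c * t) = (D:ℝ) * ((1 - s) * (1 + s)) * (c * t) := by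
    rw [← hs2]; ring
  have hden : (β * (c * t) + 1) * (c * t + γ) = (c * s + 1) * (t * (c + s)) := by
    rw [← hts]; linear_combination (c^2*t + c*t*s) * hbt
  rw [hnum, hden]
  have hdpos : 0 < (c * s + 1) * (t * (c + s)) := by positivity
  rw [div_le_div_iff₀ hdpos hs0]
  have key : s * (1 + s) ≤ 2 * ((c * s + 1) * (c + s)) := by nlinarith [mul_pos hs0 (by linarith : (0:ℝ) < 1 - s), mul_pos hc0 hs0, mul_pos (mul_pos hc0 hs0) hs0, mul_pos (mul_pos hc0 hc0) hs0]
  have hfac : 0 ≤ (D:ℝ) * (1 - s) * c * t := by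
    have : (0:ℝ) ≤ 1 - s := by linarith
    positivity
  nlinarith [mul_le_mul_of_nonneg_left key hfac]
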